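/- Let σ ∈ S_n and i, j ∈ Des(σ) with j − i > 1. Then the unordered pairs {w, w′} of reduced words of σ that differ by a single commutation move, where w ends in the letter i and w′ ends in the letter j, are exactly the pairs {a·(j, i), a·(i, j)} obtained by appending these two-letter suffixes to a word a ∈ R(σ·s_i·s_j) (note s_i·s_j = s_j·s_i); in particular, the number of commutation edges of G(σ) joining a word ending in i to a word ending in j equals |R(σ·s_i·s_j)|. Moreover, if i ∈ Des(σ) and every other element j′ of Des(σ) satisfies |j′ − i| ≤ 1, then every commutation move applied to a reduced word of σ ending in i produces a reduced word again ending in i. -/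

import Mathlib

namespace RW

/-- The simple transposition `s i = (i, i+1)`, acting on `ℕ` (points are `1, …, n`;
the point `0` is unused, matching the paper's 1-indexed conventions). -/
def s (i : ℕ) : Equiv.Perm ℕ := Equiv.swap i (i + 1)

/-- The product `s i₁ * s i₂ * ⋯ * s iₗ` of the word `w = [i₁, …, iₗ]`. -/
def π (w : List ℕ) : Equiv.Perm ℕ := (w.map s).prod

/-- The copy of the symmetric group `S_n` inside `Equiv.Perm ℕ`: permutations of
`{1, …, n}`, i.e. fixing `0` and every point `> n`. -/
def Sn (n : ℕ) : Set (Equiv.Perm ℕ) := {σ | ∀ m : ℕ, (m = 0 ∨ n < m) → σ m = m}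

/-- The length `ℓ(σ)`: the number of inversions of `σ`. -/
noncomputable def len (σ : Equiv.Perm ℕ) : ℕ :=
  Nat.card {p : ℕ × ℕ // p.1 < p.2 ∧ σ p.2 < σ p.1}

/-- `w` is a reduced word for `σ`: its product is `σ` and its length is `ℓ(σ)`. -/
def Reduced (σ : Equiv.Perm ℕ) (w : List ℕ) : Prop :=
  π w = σ ∧ w.length = len σ

/-- `R σ`: the set of reduced words of `σ`. -/
def R (σ : Equiv.Perm ℕ) : Set (List ℕ) := {w | Reduced σ w}

/-- The descent set `Des σ = {i ≥ 1 | σ(i) > σ(i+1)}`. -/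
def Des (σ : Equiv.Perm ℕ) : Set ℕ := {i | 1 ≤ i ∧ σ (i + 1) < σ i}

/-- A single commutation move: swap two adjacent letters `a, b` with `|a - b| > 1`. -/
def CommMove (w w' : List ℕ) : Prop :=
  ∃ u v : List ℕ, ∃ a b : ℕ, 1 < ((a : ℤ) - (b : ℤ)).natAbs ∧
    w = u ++ a :: b :: v ∧ w' = u ++ b :: a :: v

/-- A single braid move: replace consecutive letters `(a, a+1, a)` by `(a+1, a, a+1)`
or vice versa. -/
def BraidMove (w w' : List ℕ) : Prop :=
  ∃ u v : List ℕ, ∃ a : ℕ,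
    (w = u ++ a :: (a+1) :: a :: v ∧ w' = u ++ (a+1) :: a :: (a+1) :: v) ∨
    (w = u ++ (a+1) :: a :: (a+1) :: v ∧ w' = u ++ a :: (a+1) :: a :: v)

/-- The braid degree of a word: the number of words obtainable from it by a single
braid move.  (For `w ∈ R σ` these are exactly the braid-edge neighbours of `w` in
`G(σ)`, since a braid move sends reduced words of `σ` to reduced words of `σ`.) -/
noncomputable def dB (w : List ℕ) : ℕ := Nat.card {w' : List ℕ // BraidMove w w'}

/-- The commutation degree of a word: the number of words obtainable from it by a
single commutation move. -/
noncomputable def dC (w : List ℕ) : ℕ := Nat.card {w' : List ℕ // CommMove w w'}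

/-- The number `|B(σ)|` of braid classes: classes of `R σ` under the equivalence
generated by single braid moves. -/
noncomputable def nB (σ : Equiv.Perm ℕ) : ℕ :=
  Nat.card (Quot (fun w w' : R σ => BraidMove w.1 w'.1))

/-- The number `|C(σ)|` of commutation classes. -/
noncomputable def nC (σ : Equiv.Perm ℕ) : ℕ :=
  Nat.card (Quot (fun w w' : R σ => CommMove w.1 w'.1))

/-- The underlying function of `w₀^{(k,i)}`: reverse the interval `{i, …, i+k-1}`. -/
def w0fun (k i : ℕ) : ℕ → ℕ := fun m => if i ≤ m ∧ m < i + k then i + (i + k - 1) - m else m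

theorem w0fun_involutive (k i : ℕ) : Function.Involutive (w0fun k i) := by
  intro m
  unfold w0fun
  split_ifs <;> omega

/-- `w₀^{(k,i)}`: the permutation fixing every point outside `{i, …, i+k-1}` and
reversing that interval. -/
def w0 (k i : ℕ) : Equiv.Perm ℕ := (w0fun_involutive k i).toPerm

/-- Right weak order: `τ ≤ σ` iff `ℓ(τ) + ℓ(τ⁻¹σ) = ℓ(σ)`. -/
def wle (τ σ : Equiv.Perm ℕ) : Prop := len τ + len (τ⁻¹ * σ) = len σ

/-- The support of `σ`: the letters appearing in some reduced word of `σ`. -/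
def supp (σ : Equiv.Perm ℕ) : Set ℕ := {a | ∃ w, Reduced σ w ∧ a ∈ w}

lemma s_apply (a m : ℕ) : s a m = if m = a then a+1 else if m = a+1 then a else m := by
  simp [s, Equiv.swap_apply_def]

lemma s_s (a m : ℕ) : s a (s a m) = m := Equiv.swap_apply_self _ _ _

lemma s_mul_self (a : ℕ) : s a * s a = 1 := Equiv.swap_mul_self _ _

lemma s_comm {a b : ℕ} (h : 1 < ((a:ℤ) - b).natAbs) : s a * s b = s b * s a := by
  ext m
  simp only [Equiv.Perm.mul_apply, s_apply]
  split_ifs <;> omega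

lemma pi_append (u v : List ℕ) : π (u ++ v) = π u * π v := by simp [π]
lemma pi_cons (a : ℕ) (w : List ℕ) : π (a :: w) = s a * π w := by simp [π]
lemma pi_singleton (a : ℕ) : π [a] = s a := by simp [π]

/-- Inversion set. -/
def Inv (σ : Equiv.Perm ℕ) : Set (ℕ × ℕ) := {p | p.1 < p.2 ∧ σ p.2 < σ p.1}

lemma len_eq_ncard (σ : Equiv.Perm ℕ) : len σ = (Inv σ).ncard := by
  rw [← Nat.card_coe_set_eq]; rfl

def FB (σ : Equiv.Perm ℕ) : Prop := ∃ N, ∀ m, N ≤ m → σ m = m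

lemma fb_mul {σ τ : Equiv.Perm ℕ} (hσ : FB σ) (hτ : FB τ) : FB (σ * τ) := by
  obtain ⟨N, hN⟩ := hσ; obtain ⟨M, hM⟩ := hτ
  refine ⟨max N M, fun m hm => ?_⟩
  have h1 : τ m = m := hM m (le_trans (le_max_right _ _) hm)
  simp [Equiv.Perm.mul_apply, h1, hN m (le_trans (le_max_left _ _) hm)]

lemma fb_s (a : ℕ) : FB (s a) := ⟨a+2, fun m hm => by rw [s_apply]; split_ifs <;> omega⟩

lemma fb_pi (w : List ℕ) : FB (π w) := by
  induction w with
  | nil => exact ⟨0, fun m _ => rfl⟩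
  | cons a w ih => rw [pi_cons]; exact fb_mul (fb_s a) ih

lemma inv_finite {σ : Equiv.Perm ℕ} (h : FB σ) : (Inv σ).Finite := by
  obtain ⟨N, hN⟩ := h
  apply Set.Finite.subset ((Set.finite_Iio N).prod (Set.finite_Iio N))
  rintro ⟨p, q⟩ ⟨h1, h2⟩
  have h1' : p < q := h1
  have h2' : σ q < σ p := h2
  have hq : q < N := by
    by_contra hq
    push_neg at hq
    have hqq : σ q = q := hN q hq
    have hp : N ≤ σ p := by omega
    have h4 : σ (σ p) = σ p := hN _ hp
    have h5 : σ p = p := σ.injective h4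
    omega
  exact ⟨by simpa using lt_trans h1' hq, by simpa using hq⟩

lemma s_left (a : ℕ) : s a a = a + 1 := Equiv.swap_apply_left _ _
lemma s_right (a : ℕ) : s a (a+1) = a := Equiv.swap_apply_right _ _

lemma s_lt {a p q : ℕ} (hpq : p < q) (hne : ¬(p = a ∧ q = a+1)) : s a p < s a q := by
  rw [s_apply, s_apply]
  split_ifs <;> omega

lemma inv_mul_s {σ : Equiv.Perm ℕ} {a : ℕ} (h : σ a < σ (a+1)) :
    Inv (σ * s a) = insert (a, a+1) ((fun p : ℕ × ℕ => (s a p.1, s a p.2)) '' Inv σ) := by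
  ext ⟨p, q⟩
  simp only [Inv, Set.mem_setOf_eq, Set.mem_insert_iff, Set.mem_image, Equiv.Perm.mul_apply,
    Prod.mk.injEq, Prod.exists]
  constructor
  · rintro ⟨h1, h2⟩
    by_cases hc : p = a ∧ q = a + 1
    · exact Or.inl ⟨hc.1, hc.2⟩
    · exact Or.inr ⟨s a p, s a q, ⟨s_lt h1 hc, h2⟩, s_s a p, s_s a q⟩
  · rintro (⟨hp, hq⟩ | ⟨x, y, ⟨hxy, hσ2⟩, hx, hy⟩)
    · refine ⟨by omega, ?_⟩
      rw [hp, hq, s_right a, s_left a]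
      exact h
    · subst hx; subst hy
      have hne : ¬(x = a ∧ y = a+1) := by
        rintro ⟨rfl, rfl⟩; omega
      exact ⟨s_lt hxy hne, by rwa [s_s, s_s]⟩

lemma len_mul_s_of_lt {σ : Equiv.Perm ℕ} (hfb : FB σ) {a : ℕ} (h : σ a < σ (a+1)) :
    len (σ * s a) = len σ + 1 := by
  have hinj : Function.Injective (fun p : ℕ × ℕ => (s a p.1, s a p.2)) := by
    intro x y hxy
    simp only [Prod.mk.injEq] at hxy
    exact Prod.ext ((s a).injective hxy.1) ((s a).injective hxy.2)
  have hfin : ((fun p : ℕ × ℕ => (s a p.1, s a p.2)) '' Inv σ).Finite :=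
    (inv_finite hfb).image _
  have hnm : (a, a+1) ∉ (fun p : ℕ × ℕ => (s a p.1, s a p.2)) '' Inv σ := by
    rintro ⟨⟨x, y⟩, ⟨hxy, -⟩, hx⟩
    simp only [Prod.mk.injEq] at hx
    have h1 : x = a + 1 := by have := hx.1; rw [s_apply] at this; split_ifs at this <;> omega
    have h2 : y = a := by have := hx.2; rw [s_apply] at this; split_ifs at this <;> omega
    omega
  rw [len_eq_ncard, len_eq_ncard, inv_mul_s h, Set.ncard_insert_of_notMem hnm hfin,
    Set.ncard_image_of_injective _ hinj]

lemma len_mul_s_of_gt {σ : Equiv.Perm ℕ} (hfb : FB σ) {a : ℕ} (h : σ (a+1) < σ a) :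
    len σ = len (σ * s a) + 1 := by
  have hfb' : FB (σ * s a) := fb_mul hfb (fb_s a)
  have h1 : (σ * s a) a < (σ * s a) (a+1) := by
    simp only [Equiv.Perm.mul_apply, s_left, s_right]
    exact h
  have := len_mul_s_of_lt hfb' h1
  rwa [mul_assoc, s_mul_self, mul_one] at this

lemma len_one : len (1 : Equiv.Perm ℕ) = 0 := by
  rw [len_eq_ncard]
  convert Set.ncard_empty (ℕ × ℕ)
  ext ⟨p, q⟩
  simp only [Inv, Set.mem_setOf_eq, Equiv.Perm.one_apply, Set.mem_empty_iff_false, iff_false]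
  omega

lemma len_trichotomy (σ : Equiv.Perm ℕ) (hfb : FB σ) (a : ℕ) :
    len (σ * s a) = len σ + 1 ∨ len σ = len (σ * s a) + 1 := by
  rcases lt_trichotomy (σ a) (σ (a+1)) with h | h | h
  · exact Or.inl (len_mul_s_of_lt hfb h)
  · have := σ.injective h; omega
  · exact Or.inr (len_mul_s_of_gt hfb h)

lemma len_pi_le (w : List ℕ) : len (π w) ≤ w.length := by
  induction w using List.reverseRecOn with
  | nil => simp [π, len_one]
  | append_singleton u a ih =>
    rw [pi_append, pi_singleton, List.length_append, List.length_singleton]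
    rcases len_trichotomy (π u) (fb_pi u) a with h | h <;> omega

/-- Last letter of a reduced word is a descent (σ(a+1) < σ(a)). -/
lemma last_letter_descent {σ : Equiv.Perm ℕ} {w : List ℕ} {a : ℕ}
    (hw : π w = σ) (hlen : w.length = len σ) (hl : w.getLast? = some a) :
    σ (a + 1) < σ a ∧ len (σ * s a) + 1 = len σ := by
  have hne : w ≠ [] := by rintro rfl; simp at hl
  obtain ⟨u, rfl⟩ : ∃ u, w = u ++ [a] := by
    refine ⟨w.dropLast, ?_⟩
    have := List.dropLast_append_getLast hne
    rw [List.getLast?_eq_getLast hne] at hl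
    rw [← Option.some_inj.mp hl]
    exact this.symm
  have hπ : π u = σ * s a := by
    rw [pi_append, pi_singleton] at hw
    rw [← hw, mul_assoc, s_mul_self, mul_one]
  have hle : len (σ * s a) ≤ u.length := hπ ▸ len_pi_le u
  have hlu : u.length + 1 = len σ := by simpa using hlen
  have hfbσ : FB σ := hw ▸ fb_pi (u ++ [a])
  rcases lt_trichotomy (σ a) (σ (a+1)) with h | h | h
  · have := len_mul_s_of_lt hfbσ h; omega
  · have := σ.injective h; omega
  · exact ⟨h, (len_mul_s_of_gt hfbσ h).symm⟩


lemma getLast?_two (u : List ℕ) (a b : ℕ) : (u ++ [a, b]).getLast? = some b := by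
  have h : u ++ [a, b] = (u ++ [a]) ++ [b] := by simp
  rw [h, List.getLast?_concat]

lemma pi_two (a b : ℕ) : π [a, b] = s a * s b := by simp [π]

/-- For `σ ∈ S_n` and descents `i, j` with `j - i > 1`, the unordered
pairs of reduced words of `σ` differing by a single commutation move, one ending in
`i` and the other in `j`, are exactly the pairs `(a·(j,i), a·(i,j))` with
`a ∈ R(σ s_i s_j)`; in particular the number of such commutation edges of `G(σ)` is
`|R(σ s_i s_j)|`.  Moreover, if every other descent `j'` of `σ` satisfies
`|j' - i| ≤ 1`, then every commutation move applied to a reduced word of `σ` ending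
in `i` produces a word again ending in `i`. -/
theorem statement_4 (n : ℕ) (σ : Equiv.Perm ℕ) (hσ : σ ∈ Sn n) (i : ℕ) (hi : i ∈ Des σ) :
    (∀ j ∈ Des σ, i + 1 < j →
      ({p : List ℕ × List ℕ | p.1 ∈ R σ ∧ p.2 ∈ R σ ∧ CommMove p.1 p.2 ∧
          p.1.getLast? = some i ∧ p.2.getLast? = some j}
        = (fun a => (a ++ [j, i], a ++ [i, j])) '' R (σ * s i * s j)) ∧
      Nat.card {p : List ℕ × List ℕ | p.1 ∈ R σ ∧ p.2 ∈ R σ ∧ CommMove p.1 p.2 ∧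
          p.1.getLast? = some i ∧ p.2.getLast? = some j}
        = Nat.card (R (σ * s i * s j))) ∧
    ((∀ j' ∈ Des σ, j' ≠ i → ((j' : ℤ) - (i : ℤ)).natAbs ≤ 1) →
      ∀ w ∈ R σ, w.getLast? = some i → ∀ w' : List ℕ, CommMove w w' →
        w'.getLast? = some i) := by
  obtain ⟨hi1, hi2⟩ := hi
  have hfbσ : FB σ := ⟨n+1, fun m hm => hσ m (Or.inr (by omega))⟩
  constructor
  · intro j hj hij
    obtain ⟨hj1, hj2⟩ := hj
    have hcomm : s i * s j = s j * s i := s_comm (by omega)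
    have hlen1 : len σ = len (σ * s i) + 1 := len_mul_s_of_gt hfbσ hi2
    have hfb1 : FB (σ * s i) := fb_mul hfbσ (fb_s i)
    have e1 : s i j = j := by rw [s_apply]; split_ifs <;> omega
    have e2 : s i (j+1) = j+1 := by rw [s_apply]; split_ifs <;> omega
    have hdes2 : (σ * s i) (j+1) < (σ * s i) j := by
      simp only [Equiv.Perm.mul_apply, e1, e2]; exact hj2
    have hlen2 : len (σ * s i) = len (σ * s i * s j) + 1 := len_mul_s_of_gt hfb1 hdes2
    have k1 : ∀ g : Equiv.Perm ℕ, g * (s j * s i) * (s i * s j) = g := by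
      intro g
      simp only [mul_assoc]
      rw [← mul_assoc (s i) (s i), s_mul_self, one_mul, s_mul_self, mul_one]
    have k2 : ∀ g : Equiv.Perm ℕ, g * (s i * s j) * (s j * s i) = g := by
      intro g
      simp only [mul_assoc]
      rw [← mul_assoc (s j) (s j), s_mul_self, one_mul, s_mul_self, mul_one]
    have k3 : ∀ g : Equiv.Perm ℕ, g * (s i * s j) * (s i * s j) = g := by
      intro g; nth_rewrite 2 [hcomm]; exact k2 g
    have hset : {p : List ℕ × List ℕ | p.1 ∈ R σ ∧ p.2 ∈ R σ ∧ CommMove p.1 p.2 ∧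
          p.1.getLast? = some i ∧ p.2.getLast? = some j}
        = (fun a => (a ++ [j, i], a ++ [i, j])) '' R (σ * s i * s j) := by
      ext ⟨w, w'⟩
      simp only [Set.mem_setOf_eq, Set.mem_image, R, Reduced, Prod.mk.injEq]
      constructor
      · rintro ⟨⟨hw1, hw2⟩, ⟨hw1', hw2'⟩, ⟨u, v, a, b, hab, rfl, rfl⟩, hl, hl'⟩
        cases v with
        | cons c cs =>
          exfalso
          rw [List.getLast?_append_cons, List.getLast?_cons_cons, List.getLast?_cons_cons] at hl
          rw [List.getLast?_append_cons, List.getLast?_cons_cons, List.getLast?_cons_cons] at hl'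
          rw [hl] at hl'
          have : i = j := Option.some_inj.mp hl'
          omega
        | nil =>
          have hb : b = i := by
            rw [getLast?_two] at hl
            exact Option.some_inj.mp hl
          have ha : a = j := by
            rw [getLast?_two] at hl'
            exact Option.some_inj.mp hl'
          subst b; subst a
          have hπw : π (u ++ [j, i]) = π u * (s j * s i) := by
            rw [pi_append, pi_two]
          have hthis := k1 (π u)
          rw [← hπw, hw1] at hthis
          have hu1 : π u = σ * s i * s j := by
            rw [mul_assoc]; exact hthis.symm
          have hu2 : u.length = len (σ * s i * s j) := by
            have hl2 : (u ++ [j, i]).length = u.length + 2 := by simp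
            omega
          exact ⟨u, ⟨hu1, hu2⟩, rfl, rfl⟩
      · rintro ⟨u, ⟨hu1, hu2⟩, h1, h2⟩
        subst h1; subst h2
        have hπ1 : π (u ++ [j, i]) = σ := by
          rw [pi_append, pi_two, hu1, mul_assoc σ (s i) (s j)]; exact k2 σ
        have hπ2 : π (u ++ [i, j]) = σ := by
          rw [pi_append, pi_two, hu1, mul_assoc σ (s i) (s j)]; exact k3 σ
        refine ⟨⟨hπ1, by simp; omega⟩, ⟨hπ2, by simp; omega⟩,
          ⟨u, [], j, i, by omega, rfl, rfl⟩, getLast?_two u j i, getLast?_two u i j⟩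
    refine ⟨hset, ?_⟩
    rw [Nat.card_coe_set_eq, Nat.card_coe_set_eq, hset]
    apply Set.ncard_image_of_injective
    intro x y hxy
    simp only [Prod.mk.injEq] at hxy
    exact List.append_cancel_right hxy.1
  · intro hall w hw hlast w' hcm
    obtain ⟨hw1, hw2⟩ := hw
    obtain ⟨u, v, a, b, hab, hw_eq, hw'_eq⟩ := hcm
    subst hw_eq; subst hw'_eq
    cases v with
    | cons c cs =>
      rw [List.getLast?_append_cons, List.getLast?_cons_cons, List.getLast?_cons_cons] at hlast
      rw [List.getLast?_append_cons, List.getLast?_cons_cons, List.getLast?_cons_cons]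
      exact hlast
    | nil =>
      exfalso
      have hb : b = i := by
        rw [getLast?_two] at hlast
        exact Option.some_inj.mp hlast
      subst b
      have hcommab : s a * s i = s i * s a := s_comm hab
      rw [pi_append, pi_two] at hw1
      have hπ' : π (u ++ [i, a]) = σ := by
        rw [pi_append, pi_two, ← hcommab]; exact hw1
      have hlen' : (u ++ [i, a]).length = len σ := by
        simp only [List.length_append] at hw2 ⊢
        simpa using hw2
      have hlast' : (u ++ [i, a]).getLast? = some a := getLast?_two u i a
      obtain ⟨hd, -⟩ := last_letter_descent hπ' hlen' hlast'
      have ha1 : 1 ≤ a := by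
        rcases Nat.eq_zero_or_pos a with h0 | h0
        · subst h0
          have := hσ 0 (Or.inl rfl)
          omega
        · exact h0
      have hne : a ≠ i := by omega
      have := hall a ⟨ha1, hd⟩ hne
      omega

end RW
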